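/- Let (X,d) be a metric space, S ⊆ X, and F : S → ℝ a K-Lipschitz function. Fix s ∈ S and x ∈ X with d(s,x) ≤ εK for some ε > 0. If s' ∈ S satisfies d(s,s') ≥ 4εK, then εF(s') + (1/2)d(s',x)² ≥ εF(s) + (1/2)d(s,x)². In particular any minimizer of G(s') = εF(s') + (1/2)d(s',x)² with G(s') < G(s) lies in the ball B(s, 4εK). -/
import Mathlib


/-- If `F : S → ℝ` is `K`-Lipschitz on `S ⊆ X`, `s ∈ S`, and `dist s x ≤ ε K`,
then any `s' ∈ S` with `dist s s' ≥ 4εK` satisfies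
`ε F(s') + ½ d(s',x)² ≥ ε F(s) + ½ d(s,x)²`; in particular any minimizer `s'` of
`G(s') = ε F(s') + ½ d(s',x)²` with `G(s') < G(s)` lies in the ball `B(s, 4εK)`. -/
theorem stmt1 {X : Type*} [MetricSpace X] (S : Set X) (F : X → ℝ) (K ε : ℝ)
    (hK : 0 ≤ K) (hε : 0 < ε)
    (hF : ∀ a ∈ S, ∀ b ∈ S, |F a - F b| ≤ K * dist a b)
    (s : X) (hs : s ∈ S) (x : X) (hx : dist s x ≤ ε * K) :
    (∀ s' ∈ S, 4 * ε * K ≤ dist s s' →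
      ε * F s + (1/2) * dist s x ^ 2 ≤ ε * F s' + (1/2) * dist s' x ^ 2) ∧
    (∀ s' ∈ S, ε * F s' + (1/2) * dist s' x ^ 2 < ε * F s + (1/2) * dist s x ^ 2 →
      dist s s' < 4 * ε * K) := by
  have key : ∀ s' ∈ S, 4 * ε * K ≤ dist s s' →
      ε * F s + (1/2) * dist s x ^ 2 ≤ ε * F s' + (1/2) * dist s' x ^ 2 := by
    intro s' hs' hd
    have hLip : F s - F s' ≤ K * dist s s' := le_of_abs_le (hF s hs s' hs')
    have htri : dist s s' ≤ dist s x + dist s' x := by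
      simpa [dist_comm] using dist_triangle s x s'
    have ht : 3 * (ε * K) ≤ dist s' x := by linarith
    have h0 : (0:ℝ) ≤ dist s x := dist_nonneg
    nlinarith [sq_nonneg (dist s' x - 3 * (ε * K)), sq_nonneg (dist s x),
      mul_nonneg hε.le hK, sq_nonneg (dist s' x + ε * K)]
  refine ⟨key, fun s' hs' hlt => ?_⟩
  by_contra h
  exact absurd (key s' hs' (le_of_not_gt h)) (not_le.mpr hlt)
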